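/- arXiv:2308.08519 — 3 statements merged into one kernel-verified Lean document; each statement's English description precedes it below -/
import Mathlib

section
/- Let T be a triangulated category satisfying the octahedral axiom, with shift functor Σ, and let P be a class of objects of T closed under isomorphisms and finite direct sums, containing 0, and connective, i.e. Hom_T(X, Σ^n Y) = 0 for all X, Y ∈ P and all n ≥ 1. For n ≥ 0 set V_n := P ∗ ΣP ∗ ⋯ ∗ Σ^n P (n+1 factors). Then each class V_n is closed under extensions: for every distinguished triangle X → Y → Z → ΣX with X ∈ V_n and Z ∈ V_n, also Y ∈ V_n. -/
/-!
Statement 0: In a triangulated category `C` (satisfying the octahedral axiom) with a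
connective class of objects `P` (closed under isomorphisms, finite direct sums, containing 0),
the classes `V n = P ∗ ΣP ∗ ⋯ ∗ Σⁿ P` are closed under extensions.
-/

open CategoryTheory Limits Pretriangulated

universe v u

namespace AuslanderIyamaStmt0

variable {C : Type u} [Category.{v} C] [HasZeroObject C] [HasShift C ℤ] [Preadditive C]
  [∀ n : ℤ, (shiftFunctor C n).Additive] [Pretriangulated C] [HasBinaryBiproducts C]

/-- `S₁ ∗ S₂`: objects `Y` fitting in a distinguished triangle `X ⟶ Y ⟶ Z ⟶ X⟦1⟧`
with `X ∈ S₁` and `Z ∈ S₂`. -/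
def star (S₁ S₂ : Set C) : Set C :=
  {Y | ∃ (X Z : C) (f : X ⟶ Y) (g : Y ⟶ Z) (h : Z ⟶ X⟦(1 : ℤ)⟧),
    (Triangle.mk f g h ∈ distTriang C) ∧ X ∈ S₁ ∧ Z ∈ S₂}

/-- `Σⁿ S`, closed under isomorphism. -/
def shiftSet (n : ℤ) (S : Set C) : Set C :=
  {X | ∃ Y ∈ S, Nonempty (X ≅ Y⟦n⟧)}

/-- `V n = P ∗ ΣP ∗ ⋯ ∗ Σⁿ P` (associated to the left; by the octahedral axiom `∗` is
associative so the grouping is irrelevant). -/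
def V (P : Set C) : ℕ → Set C
  | 0 => P
  | n + 1 => star (V P n) (shiftSet ((n : ℤ) + 1) P)

/-! ### Auxiliary lemmas -/

/-- A set of objects is closed under isomorphisms. -/
def IsoClosed (S : Set C) : Prop := ∀ ⦃X Y : C⦄, (X ≅ Y) → X ∈ S → Y ∈ S

/-- A set of objects is closed under extensions. -/
def ExtClosed (S : Set C) : Prop :=
  ∀ ⦃T : Triangle C⦄, (T ∈ distTriang C) → T.obj₁ ∈ S → T.obj₃ ∈ S → T.obj₂ ∈ S

lemma mem_star {S₁ S₂ : Set C} {T : Triangle C} (hT : T ∈ distTriang C)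
    (h₁ : T.obj₁ ∈ S₁) (h₃ : T.obj₃ ∈ S₂) : T.obj₂ ∈ star S₁ S₂ :=
  ⟨T.obj₁, T.obj₃, T.mor₁, T.mor₂, T.mor₃, hT, h₁, h₃⟩

lemma star_iso {S₁ S₂ : Set C} {Y Y' : C} (hY : Y ∈ star S₁ S₂) (e : Y ≅ Y') :
    Y' ∈ star S₁ S₂ := by
  obtain ⟨X, Z, f, g, h, hT, h₁, h₂⟩ := hY
  exact ⟨X, Z, f ≫ e.hom, e.inv ≫ g, h,
    isomorphic_distinguished _ hT _
      (Triangle.isoMk _ _ (Iso.refl _) e.symm (Iso.refl _) (by change (f ≫ e.hom) ≫ e.inv = 𝟙 X ≫ f; simp) (by change (e.inv ≫ g) ≫ 𝟙 Z = e.inv ≫ g; simp) (by change h ≫ (shiftFunctor C 1).map (𝟙 X) = 𝟙 Z ≫ h; simp)),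
    h₁, h₂⟩

lemma star_mono {S₁ S₁' S₂ S₂' : Set C} (h₁ : S₁ ⊆ S₁') (h₂ : S₂ ⊆ S₂') :
    star S₁ S₂ ⊆ star S₁' S₂' := by
  rintro Y ⟨X, Z, f, g, h, hT, hX, hZ⟩
  exact ⟨X, Z, f, g, h, hT, h₁ hX, h₂ hZ⟩

lemma isoClosed_star {S₁ S₂ : Set C} : IsoClosed (star S₁ S₂) :=
  fun _ _ e hX => star_iso hX e

lemma isoClosed_shiftSet (k : ℤ) (S : Set C) : IsoClosed (shiftSet k S) := by
  rintro X Y e ⟨Q, hQ, ⟨e'⟩⟩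
  exact ⟨Q, hQ, ⟨e.symm ≪≫ e'⟩⟩

lemma isoClosed_V {P : Set C} (hPiso : IsoClosed P) : ∀ n, IsoClosed (V P n)
  | 0 => hPiso
  | _ + 1 => isoClosed_star

section Conn

variable {P : Set C}
  (hPconn : ∀ ⦃X Y : C⦄, X ∈ P → Y ∈ P → ∀ n : ℤ, 1 ≤ n → ∀ f : X ⟶ Y⟦n⟧, f = 0)
include hPconn

/-- Connectivity for shifted objects of `P`. -/
lemma conn_shift {Q W : C} (hQ : Q ∈ P) (hW : W ∈ P) (k m : ℤ) (hm : k + 1 ≤ m)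
    (f : Q⟦k⟧ ⟶ W⟦m⟧) : f = 0 := by
  have e := (shiftFunctorAdd' C (m - k) k m (by ring)).app W
  let g : Q⟦k⟧ ⟶ (W⟦m - k⟧)⟦k⟧ := f ≫ e.hom
  have h1 : (shiftFunctor C k).preimage g = 0 :=
    hPconn hQ hW (m - k) (by linarith) _
  have h2 : g = 0 := by
    rw [← Functor.map_preimage (shiftFunctor C k) g, h1, Functor.map_zero]
  have : f = g ≫ e.inv := by simp [g]
  rw [this, h2, zero_comp]

/-- Connectivity for the classes `V P n`. -/
lemma conn_V (n : ℕ) {X W : C} (hX : X ∈ V P n) (hW : W ∈ P) (m : ℤ)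
    (hm : (n : ℤ) + 1 ≤ m) (f : X ⟶ W⟦m⟧) : f = 0 := by
  induction n generalizing X m with
  | zero => exact hPconn hX hW m (by simpa using hm) f
  | succ n ih =>
    obtain ⟨X₁, X₂, a, b, c, hT, h₁, h₂⟩ := hX
    have ha : a ≫ f = 0 := ih h₁ m (by push_cast at hm ⊢; linarith) _
    obtain ⟨g, hg⟩ := Triangle.yoneda_exact₂ _ hT f ha
    obtain ⟨Q, hQ, ⟨e⟩⟩ := h₂
    have h0 : e.inv ≫ g = 0 :=
      conn_shift hPconn hQ hW ((n : ℤ) + 1) m (by push_cast at hm ⊢; linarith) _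
    have hg0 : g = 0 := by
      have : g = e.hom ≫ (e.inv ≫ g) := (Iso.hom_inv_id_assoc e g).symm
      rw [this, h0, comp_zero]; rfl
    rw [hg, hg0, comp_zero]; rfl

end Conn

section Assoc

variable [IsTriangulated C]

lemma star_assoc₁ {S₁ S₂ S₃ : Set C} {Y : C} (hY : Y ∈ star (star S₁ S₂) S₃) :
    Y ∈ star S₁ (star S₂ S₃) := by
  obtain ⟨X, Z₃, f, g, h, hT, hX, hZ₃⟩ := hY
  obtain ⟨X₁, X₂, f₁, g₁, h₁, hT₁, hX₁, hX₂⟩ := hX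
  obtain ⟨W, u, v, hW⟩ := distinguished_cocone_triangle (f₁ ≫ f)
  have O := Triangulated.someOctahedron rfl hT₁ hT hW
  exact ⟨X₁, W, f₁ ≫ f, u, v, hW, hX₁, mem_star O.mem hX₂ hZ₃⟩

lemma star_assoc₂ {S₁ S₂ S₃ : Set C} (h₁ : IsoClosed S₁) (h₂ : IsoClosed S₂)
    {Y : C} (hY : Y ∈ star S₁ (star S₂ S₃)) : Y ∈ star (star S₁ S₂) S₃ := by
  obtain ⟨X₁, W, f, g, h, hT, hX₁, hW⟩ := hY
  obtain ⟨X₂, Z₃, a, b, c, hT₂, hX₂, hZ₃⟩ := hW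
  have hTr : Triangle.mk g h (-f⟦(1 : ℤ)⟧') ∈ distTriang C := rot_of_distTriang _ hT
  have hTr₂ : Triangle.mk b c (-a⟦(1 : ℤ)⟧') ∈ distTriang C := rot_of_distTriang _ hT₂
  obtain ⟨M, u, v, hM⟩ := distinguished_cocone_triangle (g ≫ b)
  have O := Triangulated.someOctahedron rfl hTr hTr₂ hM
  have hS := Triangle.shift_distinguished _ O.mem (-1)
  have hM' : (M⟦(-1 : ℤ)⟧) ∈ star S₁ S₂ :=
    mem_star hS (h₁ (shiftShiftNeg X₁ (1 : ℤ)).symm hX₁)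
      (h₂ (shiftShiftNeg X₂ (1 : ℤ)).symm hX₂)
  exact mem_star (inv_rot_of_distTriang _ hM) hM' hZ₃

lemma star_self {S : Set C} (hS : ExtClosed S) : star S S ⊆ S := by
  rintro Y ⟨X, Z, f, g, h, hT, hX, hZ⟩
  exact hS hT hX hZ

lemma extClosed_star {S₁ S₂ : Set C} (hiso₁ : IsoClosed S₁) (hiso₂ : IsoClosed S₂)
    (h₁ : ExtClosed S₁) (h₂ : ExtClosed S₂)
    (hswap : star S₂ S₁ ⊆ star S₁ S₂) : ExtClosed (star S₁ S₂) := by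
  intro T hT hX hZ
  have step1 : T.obj₂ ∈ star S₁ (star S₂ (star S₁ S₂)) :=
    star_assoc₁ (mem_star hT hX hZ)
  have inner : star S₂ (star S₁ S₂) ⊆ star S₁ S₂ := by
    intro W hW
    have hW1 : W ∈ star (star S₂ S₁) S₂ := star_assoc₂ hiso₂ hiso₁ hW
    have hW2 : W ∈ star (star S₁ S₂) S₂ :=
      star_mono hswap (subset_refl _) hW1
    have hW3 : W ∈ star S₁ (star S₂ S₂) := star_assoc₁ hW2
    exact star_mono (subset_refl _) (star_self h₂) hW3
  have step2 : T.obj₂ ∈ star S₁ (star S₁ S₂) :=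
    star_mono (subset_refl _) inner step1
  have step3 : T.obj₂ ∈ star (star S₁ S₁) S₂ := star_assoc₂ hiso₁ hiso₁ step2
  exact star_mono (star_self h₁) (subset_refl _) step3

end Assoc

section Pieces

variable {P : Set C}
  (hPiso : ∀ ⦃X Y : C⦄, (X ≅ Y) → X ∈ P → Y ∈ P)
  (hPsum : ∀ ⦃X Y : C⦄, X ∈ P → Y ∈ P → (X ⊞ Y) ∈ P)
  (hPconn : ∀ ⦃X Y : C⦄, X ∈ P → Y ∈ P → ∀ n : ℤ, 1 ≤ n → ∀ f : X ⟶ Y⟦n⟧, f = 0)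
include hPiso hPsum hPconn

lemma extClosed_base : ExtClosed P := by
  intro T hT h₁ h₃
  have h0 : T.mor₃ = 0 := hPconn h₃ h₁ 1 le_rfl T.mor₃
  obtain ⟨e, -, -⟩ := exists_iso_binaryBiproduct_of_distTriang T hT h0
  exact hPiso e.symm (hPsum h₁ h₃)

lemma extClosed_shiftSet (k : ℤ) : ExtClosed (shiftSet k P) := by
  intro T hT h₁ h₃
  obtain ⟨Q₁, hQ₁, ⟨e₁⟩⟩ := h₁
  obtain ⟨Q₂, hQ₂, ⟨e₂⟩⟩ := h₃
  have iso1 : T.obj₁⟦(1 : ℤ)⟧ ≅ Q₁⟦k + 1⟧ :=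
    (shiftFunctor C (1 : ℤ)).mapIso e₁ ≪≫
      ((shiftFunctorAdd' C k 1 (k + 1) rfl).app Q₁).symm
  have h0' : e₂.inv ≫ T.mor₃ ≫ iso1.hom = 0 := by
    exact conn_shift hPconn hQ₂ hQ₁ k (k + 1) (by linarith) _
  have h0 : T.mor₃ = 0 := by
    have : T.mor₃ = e₂.hom ≫ (e₂.inv ≫ T.mor₃ ≫ iso1.hom) ≫ iso1.inv := by simp
    rw [this, h0', zero_comp, comp_zero]
  obtain ⟨e, -, -⟩ := exists_iso_binaryBiproduct_of_distTriang T hT h0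
  have : PreservesBinaryBiproducts (shiftFunctor C k) :=
    preservesBinaryBiproducts_of_preservesBiproducts _
  exact ⟨Q₁ ⊞ Q₂, hPsum hQ₁ hQ₂,
    ⟨e ≪≫ biprod.mapIso e₁ e₂ ≪≫ ((shiftFunctor C k).mapBiprod Q₁ Q₂).symm⟩⟩

lemma swap_V (n : ℕ) :
    star (shiftSet ((n : ℤ) + 1) P) (V P n) ⊆ star (V P n) (shiftSet ((n : ℤ) + 1) P) := by
  rintro Y ⟨A, B, f, g, h, hT, hA, hB⟩
  obtain ⟨Q, hQ, ⟨e⟩⟩ := hA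
  have iso1 : A⟦(1 : ℤ)⟧ ≅ Q⟦(n : ℤ) + 2⟧ :=
    (shiftFunctor C (1 : ℤ)).mapIso e ≪≫
      ((shiftFunctorAdd' C ((n : ℤ) + 1) 1 ((n : ℤ) + 2) (by ring)).app Q).symm
  have h0' : h ≫ iso1.hom = 0 :=
    conn_V hPconn n hB hQ ((n : ℤ) + 2) (by linarith) _
  have h0 : h = 0 := by
    have : h = (h ≫ iso1.hom) ≫ iso1.inv := by simp
    rw [this, h0', zero_comp]
  obtain ⟨e2, -, -⟩ := exists_iso_binaryBiproduct_of_distTriang _ hT h0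
  have hmem : (B ⊞ A) ∈ star (V P n) (shiftSet ((n : ℤ) + 1) P) :=
    mem_star (binaryBiproductTriangle_distinguished B A) hB ⟨Q, hQ, ⟨e⟩⟩
  exact star_iso hmem ((biprod.braiding B A) ≪≫ e2.symm)

lemma extClosed_V [IsTriangulated C] (n : ℕ) : ExtClosed (V P n) := by
  induction n with
  | zero => exact extClosed_base hPiso hPsum hPconn
  | succ n ih =>
    exact extClosed_star (isoClosed_V hPiso n) (isoClosed_shiftSet _ _)
      ih (extClosed_shiftSet hPiso hPsum hPconn _)
      (swap_V hPiso hPsum hPconn n)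

end Pieces

theorem statement0 [IsTriangulated C] (P : Set C)
    (hPiso : ∀ ⦃X Y : C⦄, (X ≅ Y) → X ∈ P → Y ∈ P)
    (hPsum : ∀ ⦃X Y : C⦄, X ∈ P → Y ∈ P → (X ⊞ Y) ∈ P)
    (hPzero : ∀ ⦃X : C⦄, IsZero X → X ∈ P)
    (hPconn : ∀ ⦃X Y : C⦄, X ∈ P → Y ∈ P → ∀ n : ℤ, 1 ≤ n → ∀ f : X ⟶ Y⟦n⟧, f = 0)
    (n : ℕ) {X Y Z : C} (f : X ⟶ Y) (g : Y ⟶ Z) (h : Z ⟶ X⟦(1 : ℤ)⟧)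
    (hT : Triangle.mk f g h ∈ distTriang C)
    (hX : X ∈ V P n) (hZ : Z ∈ V P n) :
    Y ∈ V P n :=
  extClosed_V hPiso hPsum hPconn n hT hX hZ

end AuslanderIyamaStmt0
end

section
/- Fix d ≥ 1. Let A be an abelian category with enough projectives such that (i) every object of A has projective dimension at most d + 1, and (ii) every projective object P fits in an exact sequence 0 → P → I⁰ → I¹ → ⋯ → I^d in which each I^k is both projective and injective. Then A has enough injectives, and moreover every injective object J of A fits in an exact sequence 0 → Y → Q_d → Q_{d-1} → ⋯ → Q_0 → J → 0 in which each Q_k is both projective and injective (i.e. A also has codominant dimension at least d + 1). -/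
/-!
Statement 10: Let `A` be an abelian category with enough projectives such that every
object has projective dimension at most `d + 1` and every projective object admits a
coresolution `0 → P → I⁰ → ⋯ → I^d` by projective-injective objects (`A` is
`d`-Auslander). Then `A` has enough injectives, and every injective object `J` fits in
an exact sequence `0 → Y → Q_d → ⋯ → Q_0 → J → 0` with all `Q_k` projective-injective.
-/

open CategoryTheory Limits
open ZeroObject

universe v u

namespace AuslanderIyamaStmt10

variable {A : Type u} [Category.{v} A] [Abelian A]

/-- `ProjDimLE X n`: `X` admits a projective resolution of length at most `n`,
expressed via syzygy short exact sequences. -/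
def ProjDimLE : A → ℕ → Prop
  | X, 0 => Projective X
  | X, n + 1 => ∃ (P K : A) (f : K ⟶ P) (g : P ⟶ X) (w : f ≫ g = 0),
      Projective P ∧ (ShortComplex.mk f g w).ShortExact ∧ ProjDimLE K n

/-- `CoresProjInj X n`: there are short exact sequences `X ↪ I⁰ ↠ Y¹`, `Y¹ ↪ I¹ ↠ Y²`,
…, with `n` projective-injective middle terms, i.e. `X` fits in an exact sequence
`0 → X → I⁰ → ⋯ → I^{n-1}` with all `I^k` projective-injective. -/
def CoresProjInj : A → ℕ → Prop
  | _, 0 => True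
  | X, n + 1 => ∃ (I Y : A) (f : X ⟶ I) (g : I ⟶ Y) (w : f ≫ g = 0),
      Projective I ∧ Injective I ∧ (ShortComplex.mk f g w).ShortExact ∧ CoresProjInj Y n

/-- `ResProjInj X n` (dual to `CoresProjInj`): there are short exact sequences
`K₁ ↪ Q₀ ↠ X`, `K₂ ↪ Q₁ ↠ K₁`, …, with `n` projective-injective middle terms, i.e. `X`
fits in an exact sequence `0 → Y → Q_{n-1} → ⋯ → Q_0 → X → 0` with all `Q_k`
projective-injective. -/
def ResProjInj : A → ℕ → Prop
  | _, 0 => True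
  | X, n + 1 => ∃ (Q K : A) (f : K ⟶ Q) (g : Q ⟶ X) (w : f ≫ g = 0),
      Projective Q ∧ Injective Q ∧ (ShortComplex.mk f g w).ShortExact ∧ ResProjInj K n


/-- `Ext^1(C, K) = 0`, formulated as: every short exact sequence
`0 → K → B → C → 0` admits a section of its epimorphism. -/
def LL (C K : A) : Prop :=
  ∀ ⦃B : A⦄ (f : K ⟶ B) (g : B ⟶ C) (w : f ≫ g = 0),
    (ShortComplex.mk f g w).ShortExact → ∃ s : C ⟶ B, s ≫ g = 𝟙 C

lemma ses_of_mono {X Y : A} (f : X ⟶ Y) [Mono f] :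
    (ShortComplex.mk f (cokernel.π f) (cokernel.condition f)).ShortExact :=
  ⟨ShortComplex.exact_cokernel f⟩

lemma ses_of_epi {X Y : A} (g : X ⟶ Y) [Epi g] :
    (ShortComplex.mk (kernel.ι g) g (kernel.condition g)).ShortExact :=
  ⟨ShortComplex.exact_kernel g⟩

/-- From a section of `g` in a short exact sequence, get a retraction of `f`. -/
lemma retraction_of_section {X Y Z : A} {f : X ⟶ Y} {g : Y ⟶ Z} {w : f ≫ g = 0}
    (hse : (ShortComplex.mk f g w).ShortExact) {s : Z ⟶ Y} (hs : s ≫ g = 𝟙 Z) :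
    ∃ r : Y ⟶ X, f ≫ r = 𝟙 X := by
  have := hse.mono_f
  exact ⟨(ShortComplex.Splitting.ofExactOfSection _ hse.exact s hs hse.mono_f).r,
    (ShortComplex.Splitting.ofExactOfSection _ hse.exact s hs hse.mono_f).f_r⟩

lemma section_of_retraction {X Y Z : A} {f : X ⟶ Y} {g : Y ⟶ Z} {w : f ≫ g = 0}
    (hse : (ShortComplex.mk f g w).ShortExact) {r : Y ⟶ X} (hr : f ≫ r = 𝟙 X) :
    ∃ s : Z ⟶ Y, s ≫ g = 𝟙 Z := by
  have := hse.epi_g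
  exact ⟨(ShortComplex.Splitting.ofExactOfRetraction _ hse.exact r hr hse.epi_g).s,
    (ShortComplex.Splitting.ofExactOfRetraction _ hse.exact r hr hse.epi_g).s_g⟩

lemma LL_of_injective {C K : A} (hK : Injective K) : LL C K := by
  intro B f g w hse
  have := hse.mono_f
  exact section_of_retraction hse (Injective.comp_factorThru (𝟙 K) f)

lemma LL_of_projective {C K : A} (hC : Projective C) : LL C K := by
  intro B f g w hse
  have := hse.epi_g
  exact ⟨Projective.factorThru (𝟙 C) g, Projective.factorThru_comp _ _⟩

lemma retraction_of_forall_LL {Y B : A} (h : ∀ C : A, LL C Y) (u : Y ⟶ B) [Mono u] :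
    ∃ r : B ⟶ Y, u ≫ r = 𝟙 Y := by
  obtain ⟨s, hs⟩ := h (cokernel u) u (cokernel.π u) (cokernel.condition u) (ses_of_mono u)
  exact retraction_of_section (ses_of_mono u) hs

lemma injective_of_forall_LL {Y : A} (h : ∀ C : A, LL C Y) : Injective Y := by
  constructor
  intro S T h0 g hg
  obtain ⟨r, hr⟩ := retraction_of_forall_LL h (pushout.inl h0 g)
  exact ⟨pushout.inr h0 g ≫ r, by rw [← Category.assoc, ← pushout.condition,
    Category.assoc, hr, Category.comp_id]⟩



lemma pushout_ses_fst {X Y Z W : A} (f : X ⟶ Y) (g : X ⟶ Z) {q : Y ⟶ W} {w : f ≫ q = 0}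
    (hse : (ShortComplex.mk f q w).ShortExact) :
    (ShortComplex.mk (pushout.inr f g)
      (pushout.desc q 0 (by rw [w, comp_zero]))
      (pushout.inr_desc _ _ _)).ShortExact := by
  have hmf : Mono f := hse.mono_f
  have hq : Epi q := hse.epi_g
  have hepi : Epi (pushout.desc q 0 (show f ≫ q = g ≫ 0 by rw [w, comp_zero])) := by
    have : Epi (pushout.inl f g ≫ pushout.desc q 0
        (show f ≫ q = g ≫ 0 by rw [w, comp_zero])) := by
      rw [pushout.inl_desc]; infer_instance
    exact epi_of_epi (pushout.inl f g) _
  have hmono : Mono (pushout.inr f g : Z ⟶ pushout f g) := inferInstance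
  refine ShortComplex.ShortExact.mk' ?_ hmono hepi
  apply ShortComplex.exact_of_g_is_cokernel
  refine CokernelCofork.IsColimit.ofπ' _ _ (fun {T} k hk => ?_)
  have hfk : f ≫ (pushout.inl f g ≫ k) = 0 := by
    rw [← Category.assoc, pushout.condition, Category.assoc, hk, comp_zero]
  obtain ⟨l, hl⟩ := CokernelCofork.IsColimit.desc' hse.gIsCokernel (pushout.inl f g ≫ k) hfk
  refine ⟨l, ?_⟩
  apply pushout.hom_ext
  · rw [pushout.inl_desc_assoc]; exact hl
  · rw [pushout.inr_desc_assoc, zero_comp, hk]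

lemma pushout_ses_snd {X Y Z W : A} (f : X ⟶ Y) (g : X ⟶ Z) {q : Z ⟶ W} {w : g ≫ q = 0}
    (hse : (ShortComplex.mk g q w).ShortExact) :
    (ShortComplex.mk (pushout.inl f g)
      (pushout.desc 0 q (by rw [w, comp_zero]))
      (pushout.inl_desc _ _ _)).ShortExact := by
  have hmf : Mono g := hse.mono_f
  have hq : Epi q := hse.epi_g
  have hepi : Epi (pushout.desc 0 q (show f ≫ 0 = g ≫ q by rw [w, comp_zero])) := by
    have : Epi (pushout.inr f g ≫ pushout.desc 0 q
        (show f ≫ 0 = g ≫ q by rw [w, comp_zero])) := by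
      rw [pushout.inr_desc]; infer_instance
    exact epi_of_epi (pushout.inr f g) _
  have hmono : Mono (pushout.inl f g : Y ⟶ pushout f g) := inferInstance
  refine ShortComplex.ShortExact.mk' ?_ hmono hepi
  apply ShortComplex.exact_of_g_is_cokernel
  refine CokernelCofork.IsColimit.ofπ' _ _ (fun {T} k hk => ?_)
  have hgk : g ≫ (pushout.inr f g ≫ k) = 0 := by
    rw [← Category.assoc, ← pushout.condition, Category.assoc, hk, comp_zero]
  obtain ⟨l, hl⟩ := CokernelCofork.IsColimit.desc' hse.gIsCokernel (pushout.inr f g ≫ k) hgk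
  refine ⟨l, ?_⟩
  apply pushout.hom_ext
  · rw [pushout.inl_desc_assoc, zero_comp, hk]
  · rw [pushout.inr_desc_assoc]; exact hl

lemma pullback_ses {W Y X Z : A} {ι : W ⟶ Y} {π : Y ⟶ X} {w : ι ≫ π = 0}
    (hse : (ShortComplex.mk ι π w).ShortExact) (u : Z ⟶ X) :
    (ShortComplex.mk (pullback.lift ι 0 (by rw [w, zero_comp]) : W ⟶ pullback π u)
      (pullback.snd π u) (pullback.lift_snd _ _ _)).ShortExact := by
  have hmι : Mono ι := hse.mono_f
  have hπ : Epi π := hse.epi_g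
  have hepi : Epi (pullback.snd π u) := inferInstance
  have hmono : Mono (pullback.lift ι 0 (show ι ≫ π = 0 ≫ u by rw [w, zero_comp])
      : W ⟶ pullback π u) := by
    have : Mono ((pullback.lift ι 0 (show ι ≫ π = 0 ≫ u by rw [w, zero_comp])
        : W ⟶ pullback π u) ≫ pullback.fst π u) := by
      rw [pullback.lift_fst]; infer_instance
    exact mono_of_mono _ (pullback.fst π u)
  refine ShortComplex.ShortExact.mk' ?_ hmono hepi
  apply ShortComplex.exact_of_f_is_kernel
  refine KernelFork.IsLimit.ofι' _ _ (fun {T} t ht => ?_)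
  have htπ : (t ≫ pullback.fst π u) ≫ π = 0 := by
    rw [Category.assoc, pullback.condition, ← Category.assoc, ht, zero_comp]
  obtain ⟨l, hl⟩ := KernelFork.IsLimit.lift' hse.fIsKernel (t ≫ pullback.fst π u) htπ
  refine ⟨l, ?_⟩
  apply pullback.hom_ext
  · simpa only [Category.assoc, pullback.lift_fst] using show l ≫ ι = t ≫ pullback.fst π u from hl
  · simp only [Category.assoc, pullback.lift_snd, comp_zero]
    exact ht.symm


lemma ext_of_LL {C I C' K : A} {c : C ⟶ I} {e : I ⟶ C'} {w : c ≫ e = 0}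
    (hse : (ShortComplex.mk c e w).ShortExact) (hL : LL C' K) (γ : C ⟶ K) :
    ∃ g : I ⟶ K, c ≫ g = γ := by
  have hpo := pushout_ses_snd γ c hse
  obtain ⟨s, hs⟩ := hL _ _ _ hpo
  obtain ⟨r, hr⟩ := retraction_of_section hpo hs
  refine ⟨pushout.inr γ c ≫ r, ?_⟩
  rw [← Category.assoc, ← pushout.condition, Category.assoc, hr, Category.comp_id]

lemma lift_of_LL {X' Y I Y' : A} {ι : Y ⟶ I} {π : I ⟶ Y'} {w : ι ≫ π = 0}
    (hse : (ShortComplex.mk ι π w).ShortExact) (hL : LL X' Y) (u : X' ⟶ Y') :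
    ∃ v : X' ⟶ I, v ≫ π = u := by
  have hpb := pullback_ses hse u
  obtain ⟨s, hs⟩ := hL _ _ _ hpb
  refine ⟨s ≫ pullback.fst π u, ?_⟩
  rw [Category.assoc, pullback.condition, ← Category.assoc]
  exact hs ▸ by rw [Category.id_comp]

lemma LL_step {K' Q K C I C' : A}
    {k : K' ⟶ Q} {q : Q ⟶ K} {wkq : k ≫ q = 0}
    (hseQ : (ShortComplex.mk k q wkq).ShortExact) (hQ : Injective Q)
    {c : C ⟶ I} {e : I ⟶ C'} {wce : c ≫ e = 0}
    (hseC : (ShortComplex.mk c e wce).ShortExact) (hI : Projective I)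
    (hL : LL C' K) : LL C K' := by
  intro B f g w hse
  have hpo1 := pushout_ses_snd k f hse
  have hpo2 := pushout_ses_fst k f hseQ
  -- section of the projection to C, since Q is injective
  obtain ⟨s₀, hs₀⟩ := LL_of_injective (C := C) hQ _ _ _ hpo1
  set τ : pushout k f ⟶ K := pushout.desc q 0 (by rw [wkq, comp_zero]) with hτ
  set γ : C ⟶ K := s₀ ≫ τ with hγ
  obtain ⟨gI, hgI⟩ := ext_of_LL hseC hL γ
  have hq : Epi q := hseQ.epi_g
  set hIq : I ⟶ Q := Projective.factorThru gI q with hIqdef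
  have hfac : hIq ≫ q = gI := Projective.factorThru_comp _ _
  set s' : C ⟶ pushout k f := s₀ - (c ≫ hIq) ≫ pushout.inl k f with hs'
  have hs'τ : s' ≫ τ = 0 := by
    rw [hs', Preadditive.sub_comp, Category.assoc, Category.assoc, pushout.inl_desc,
      ← Category.assoc, Category.assoc, hfac, hgI, sub_self]
  -- s' factors through B, the kernel of τ
  obtain ⟨s'', hs''⟩ := KernelFork.IsLimit.lift' hpo2.fIsKernel s' hs'τ
  refine ⟨s'', ?_⟩
  have hinrπ : pushout.inr k f ≫ pushout.desc 0 g (show k ≫ 0 = f ≫ g by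
      rw [w, comp_zero]) = g := pushout.inr_desc _ _ _
  calc s'' ≫ g = s'' ≫ pushout.inr k f ≫ pushout.desc 0 g _ := by rw [hinrπ]
  _ = s' ≫ pushout.desc 0 g _ := by rw [← Category.assoc]; exact congrArg (· ≫ _) hs''
  _ = 𝟙 C := by
      simp only [hs', Preadditive.sub_comp, Category.assoc, pushout.inl_desc, comp_zero,
        sub_zero]
      exact hs₀

lemma coresProjInj_succ : ∀ (n : ℕ) (X : A), CoresProjInj X (n + 1) → CoresProjInj X n
  | 0, _, _ => trivial
  | n + 1, X, ⟨I, Y, f, g, w, hIp, hIi, hse, hY⟩ =>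
    ⟨I, Y, f, g, w, hIp, hIi, hse, coresProjInj_succ n Y hY⟩

lemma coresProjInj_le {m n : ℕ} (h : m ≤ n) {X : A} (hX : CoresProjInj X n) :
    CoresProjInj X m := by
  induction n with
  | zero => exact (Nat.le_zero.mp h) ▸ hX
  | succ n ih =>
    rcases Nat.lt_or_ge m (n+1) with h' | h'
    · exact ih (Nat.lt_succ_iff.mp h') (coresProjInj_succ n X hX)
    · exact (Nat.le_antisymm h h') ▸ hX

lemma res_build [EnoughProjectives A] (d : ℕ)
    (hdom : ∀ P : A, Projective P → CoresProjInj P (d + 1)) :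
    ∀ (n i : ℕ), i + n = d + 1 → ∀ K : A,
      (∀ C : A, CoresProjInj C i → LL C K) → ResProjInj K n := by
  intro n
  induction n with
  | zero => intro i _ K _; trivial
  | succ n ih =>
    intro i hi K hK
    have hid : i ≤ d := by omega
    -- projective presentation of K
    obtain ⟨I0, C1, m, e, wme, hI0p, hI0i, hseI, hC1⟩ :=
      hdom (Projective.over K) (inferInstance : Projective (Projective.over K))
    -- extend the epimorphism `Projective.π K` along `m`
    obtain ⟨r, hr⟩ := ext_of_LL hseI
      (hK C1 (coresProjInj_le hid hC1)) (Projective.π K)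
    have hre : Epi r := by
      have : Epi (m ≫ r) := by rw [hr]; infer_instance
      exact epi_of_epi m r
    have hker := ses_of_epi r
    have hK' : ∀ C : A, CoresProjInj C (i + 1) → LL C (kernel r) := by
      intro C hC
      obtain ⟨I, Y, c, e', w', hIp, hIi, hse', hY⟩ := hC
      exact LL_step hker hI0i hse' hIp (hK Y (hY))
    exact ⟨I0, kernel r, kernel.ι r, r, kernel.condition r, hI0p, hI0i, hker,
      ih (i + 1) (by omega) (kernel r) hK'⟩

lemma part2 [EnoughProjectives A] (d : ℕ)
    (hdom : ∀ P : A, Projective P → CoresProjInj P (d + 1)) (J : A) (hJ : Injective J) :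
    ResProjInj J (d + 1) :=
  res_build d hdom (d + 1) 0 (by omega) J (fun C _ => LL_of_injective hJ)

lemma LL_shift {Y I Y' X' P X : A}
    {ι : Y ⟶ I} {π : I ⟶ Y'} {w1 : ι ≫ π = 0}
    (hseY : (ShortComplex.mk ι π w1).ShortExact) (hIinj : Injective I)
    {α : X' ⟶ P} {β : P ⟶ X} {w2 : α ≫ β = 0}
    (hseX : (ShortComplex.mk α β w2).ShortExact) (hPproj : Projective P)
    (hL : LL X' Y) : LL X Y' := by
  intro B f g w hse
  have hge : Epi g := hse.epi_g
  have hβe : Epi β := hseX.epi_g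
  set h : P ⟶ B := Projective.factorThru β g with hh
  have hhg : h ≫ g = β := Projective.factorThru_comp _ _
  have hαh : (α ≫ h) ≫ g = 0 := by rw [Category.assoc, hhg, w2]
  obtain ⟨u, hu⟩ := KernelFork.IsLimit.lift' hse.fIsKernel (α ≫ h) hαh
  have hu' : u ≫ f = α ≫ h := hu
  obtain ⟨v, hv⟩ := lift_of_LL hseY hL u
  have hmα : Mono α := hseX.mono_f
  set w' : P ⟶ I := Injective.factorThru v α with hw'
  have hαw : α ≫ w' = v := Injective.comp_factorThru v α
  set h' : P ⟶ B := h - w' ≫ π ≫ f with hh'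
  have hαh' : α ≫ h' = 0 := by
    rw [hh', Preadditive.comp_sub, ← Category.assoc, hαw, ← Category.assoc, hv, hu', sub_self]
  obtain ⟨s, hs⟩ := CokernelCofork.IsColimit.desc' hseX.gIsCokernel h' hαh'
  have hs' : β ≫ s = h' := hs
  refine ⟨s, ?_⟩
  have hkey : β ≫ s ≫ g = β ≫ 𝟙 X := by
    rw [← Category.assoc, hs', hh', Preadditive.sub_comp, hhg, Category.comp_id,
      Category.assoc, Category.assoc, w, comp_zero, comp_zero, sub_zero]
  exact (cancel_epi β).mp hkey

/-- `CosyzN Y n`: `Y` is an `n`-th cosyzygy of a projective object with respect to a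
coresolution by injective objects. -/
def CosyzN : A → ℕ → Prop
  | Y, 0 => Projective Y
  | Y, n + 1 => ∃ (Y₀ I : A) (ι : Y₀ ⟶ I) (π : I ⟶ Y) (w : ι ≫ π = 0),
      Injective I ∧ (ShortComplex.mk ι π w).ShortExact ∧ CosyzN Y₀ n

lemma LL_of_pd_cosyz : ∀ (n : ℕ) (X Y : A), ProjDimLE X n → CosyzN Y n → LL X Y
  | 0, _, _, hX, _ => LL_of_projective hX
  | n + 1, _, _, ⟨_, K, _, _, _, hP, hseX, hK⟩, ⟨Y₀, _, _, _, _, hI, hseY, hY₀⟩ =>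
      LL_shift hseY hI hseX hP (LL_of_pd_cosyz n K Y₀ hK hY₀)

lemma injective_of_cosyzN (d : ℕ) (hgl : ∀ X : A, ProjDimLE X (d + 1)) {Y : A}
    (hY : CosyzN Y (d + 1)) : Injective Y :=
  injective_of_forall_LL (fun C => LL_of_pd_cosyz _ C Y (hgl C) hY)

/-- `InjCor X n`: `X` admits an injective coresolution of length `n`, ending in an
injective object. -/
def InjCor : A → ℕ → Prop
  | X, 0 => Injective X
  | X, n + 1 => ∃ (E Y : A) (ι : X ⟶ E) (π : E ⟶ Y) (w : ι ≫ π = 0),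
      Injective E ∧ (ShortComplex.mk ι π w).ShortExact ∧ InjCor Y n

lemma injective_of_retract {X G : A} (s : X ⟶ G) (r : G ⟶ X) (hsr : s ≫ r = 𝟙 X)
    (hG : Injective G) : Injective X := by
  constructor
  intro S T h0 g hm
  obtain ⟨k, hk⟩ := hG.factors (h0 ≫ s) g
  exact ⟨k ≫ r, by rw [← Category.assoc, hk, Category.assoc, hsr, Category.comp_id]⟩

lemma injective_biprod {E₁ E₂ : A} (h₁ : Injective E₁) (h₂ : Injective E₂) :
    Injective (E₁ ⊞ E₂) := by
  constructor
  intro S T h0 m hm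
  obtain ⟨k₁, hk₁⟩ := h₁.factors (h0 ≫ biprod.fst) m
  obtain ⟨k₂, hk₂⟩ := h₂.factors (h0 ≫ biprod.snd) m
  refine ⟨biprod.lift k₁ k₂, ?_⟩
  apply biprod.hom_ext
  · rw [Category.assoc, biprod.lift_fst, hk₁]
  · rw [Category.assoc, biprod.lift_snd, hk₂]

lemma injective_zero : Injective (0 : A) := by
  constructor
  intro S T h0 g hm
  exact ⟨0, (isZero_zero A).eq_of_tgt _ _⟩

lemma epi_to_zero (X : A) : Epi (0 : X ⟶ (0 : A)) := by
  constructor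
  intro Z u v _
  exact (isZero_zero A).eq_of_src u v

lemma ses_id_zero (X : A) :
    (ShortComplex.mk (𝟙 X) (0 : X ⟶ (0 : A)) (comp_zero)).ShortExact := by
  have : Epi (0 : X ⟶ (0 : A)) := epi_to_zero X
  refine ShortComplex.ShortExact.mk' ?_ inferInstance this
  apply ShortComplex.exact_of_f_is_kernel
  exact KernelFork.IsLimit.ofι' _ _ (fun {T} k _ => ⟨k, Category.comp_id k⟩)

lemma injCor_of_injective : ∀ (n : ℕ) {X : A}, Injective X → InjCor X n
  | 0, _, h => h
  | n + 1, X, h =>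
      ⟨X, 0, 𝟙 X, 0, comp_zero, h, ses_id_zero X, injCor_of_injective n injective_zero⟩

lemma injCor_succ : ∀ (n : ℕ) {X : A}, InjCor X n → InjCor X (n + 1)
  | 0, _, h => injCor_of_injective 1 h
  | n + 1, _, ⟨E, Y, ι, π, w, hE, hse, hY⟩ =>
      ⟨E, Y, ι, π, w, hE, hse, injCor_succ n hY⟩

lemma injCor_of_iso : ∀ (n : ℕ) {X X' : A}, (X ≅ X') → InjCor X n → InjCor X' n
  | 0, _, _, e, h => Injective.of_iso e h
  | _ + 1, X, X', e, ⟨E, Y, ι, π, w, hE, hse, hY⟩ =>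
      ⟨E, Y, e.inv ≫ ι, π, by rw [Category.assoc, w, comp_zero], hE,
        ShortComplex.shortExact_of_iso
          (ShortComplex.isoMk e (Iso.refl E) (Iso.refl Y) (by simp) (by simp)) hse, hY⟩

lemma injCor_of_cores (d : ℕ) (hgl : ∀ X : A, ProjDimLE X (d + 1)) :
    ∀ (n j : ℕ) (Y : A), CosyzN Y j → CoresProjInj Y n → j + n = d + 1 → InjCor Y n := by
  intro n
  induction n with
  | zero =>
    intro j Y hc _ hj
    have : j = d + 1 := by omega
    exact injective_of_cosyzN d hgl (this ▸ hc)
  | succ n ih =>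
    rintro j Y hc ⟨I, Y', f, g, w, hIp, hIi, hse, hY'⟩ hj
    exact ⟨I, Y', f, g, w, hIi, hse,
      ih (j + 1) Y' ⟨Y, I, f, g, w, hIi, hse, hc⟩ hY' (by omega)⟩

lemma injCor_of_projective (d : ℕ) (hgl : ∀ X : A, ProjDimLE X (d + 1))
    (hdom : ∀ P : A, Projective P → CoresProjInj P (d + 1))
    {P : A} (hP : Projective P) : InjCor P (d + 1) :=
  injCor_of_cores d hgl (d + 1) 0 P hP (hdom P hP) (by omega)

section QuotTrick

attribute [local instance] CategoryTheory.Abelian.Pseudoelement.objectToSort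
  CategoryTheory.Abelian.Pseudoelement.homToFun

lemma injCor_quot : ∀ (n : ℕ) {E G X : A} (ι : E ⟶ G) (σ : G ⟶ X) (w : ι ≫ σ = 0)
    (_ : (ShortComplex.mk ι σ w).ShortExact) (_ : Injective E),
    InjCor G n → InjCor X n := by
  intro n
  induction n with
  | zero =>
    intro E G X ι σ w hse hE hG
    obtain ⟨s, hs⟩ := LL_of_injective (C := X) hE _ _ _ hse
    exact injective_of_retract s σ hs hG
  | succ m ih =>
    rintro E G X ι σ w hse hE ⟨F, G', g', p', w', hF, hseG, hG'⟩
    have hmι : Mono ι := hse.mono_f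
    have hmg' : Mono g' := hseG.mono_f
    have hσe : Epi σ := hse.epi_g
    have hp'e : Epi p' := hseG.epi_g
    have hmιg : Mono (ι ≫ g') := mono_comp ι g'
    have hsesF := ses_of_mono (ι ≫ g')
    -- cokernel (ι ≫ g') is injective, being a retract of F
    obtain ⟨sF, hsF⟩ := LL_of_injective (C := cokernel (ι ≫ g')) hE _ _ _ hsesF
    have hFbar : Injective (cokernel (ι ≫ g')) :=
      injective_of_retract sF (cokernel.π (ι ≫ g')) hsF hF
    -- the induced monomorphism X ⟶ cokernel (ι ≫ g')
    have hgπ : ι ≫ g' ≫ cokernel.π (ι ≫ g') = 0 := by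
      rw [← Category.assoc]; exact cokernel.condition _
    obtain ⟨x0, hx0⟩ := CokernelCofork.IsColimit.desc' hse.gIsCokernel
      (g' ≫ cokernel.π (ι ≫ g')) hgπ
    let x : X ⟶ cokernel (ι ≫ g') := x0
    have hx' : σ ≫ x = g' ≫ cokernel.π (ι ≫ g') := hx0
    have hmx : Mono x := by
      apply Abelian.Pseudoelement.mono_of_zero_of_map_zero
      intro a ha
      obtain ⟨b, hb⟩ := Abelian.Pseudoelement.pseudo_surjective_of_epi σ a
      have h1 : cokernel.π (ι ≫ g') (g' b) = 0 := by
        have h2 : (σ ≫ x) b = 0 := by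
          rw [Abelian.Pseudoelement.comp_apply, hb, ha]
        rwa [hx', Abelian.Pseudoelement.comp_apply] at h2
      obtain ⟨c, hc⟩ := Abelian.Pseudoelement.pseudo_exact_of_exact hsesF.exact (g' b) h1
      have hc' : g' (ι c) = g' b := by
        rw [← Abelian.Pseudoelement.comp_apply]; exact hc
      have hbc : ι c = b := Abelian.Pseudoelement.pseudo_injective_of_mono g' hc'
      rw [← hb, ← hbc, ← Abelian.Pseudoelement.comp_apply, w]
      exact Abelian.Pseudoelement.zero_apply _ _
    -- the cokernel of x is isomorphic to G'
    have hup : (ι ≫ g') ≫ p' = 0 := by rw [Category.assoc, w', comp_zero]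
    have hπu : cokernel.π (ι ≫ g') ≫ cokernel.desc (ι ≫ g') p' hup = p' :=
      cokernel.π_desc _ _ _
    have hxu : x ≫ cokernel.desc (ι ≫ g') p' hup = 0 := by
      rw [← cancel_epi σ, ← Category.assoc, hx', Category.assoc, hπu, w', comp_zero]
    have hπubar : cokernel.π x ≫ cokernel.desc x _ hxu = cokernel.desc (ι ≫ g') p' hup :=
      cokernel.π_desc _ _ _
    have hwm0 : g' ≫ cokernel.π (ι ≫ g') ≫ cokernel.π x = 0 := by
      rw [← Category.assoc, ← hx', Category.assoc, cokernel.condition, comp_zero]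
    obtain ⟨wm, hwm⟩ := CokernelCofork.IsColimit.desc' hseG.gIsCokernel
      (cokernel.π (ι ≫ g') ≫ cokernel.π x) hwm0
    have hwm' : p' ≫ wm = cokernel.π (ι ≫ g') ≫ cokernel.π x := hwm
    have huwm : cokernel.desc (ι ≫ g') p' hup ≫ wm = cokernel.π x := by
      rw [← cancel_epi (cokernel.π (ι ≫ g')), ← Category.assoc, hπu, hwm']
    have h1 : wm ≫ cokernel.desc x _ hxu = 𝟙 G' := by
      rw [← cancel_epi p', ← Category.assoc, hwm', Category.assoc, hπubar, hπu,
        Category.comp_id]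
    have h2 : cokernel.desc x _ hxu ≫ wm = 𝟙 (cokernel x) := by
      rw [← cancel_epi (cokernel.π x), ← Category.assoc, hπubar, huwm, Category.comp_id]
    have hiso : G' ≅ cokernel x := ⟨wm, cokernel.desc x _ hxu, h1, h2⟩
    exact ⟨cokernel (ι ≫ g'), cokernel x, x, cokernel.π x, cokernel.condition x, hFbar,
      ses_of_mono x, injCor_of_iso m hiso hG'⟩

end QuotTrick

section PseudoMono

attribute [local instance] CategoryTheory.Abelian.Pseudoelement.objectToSort
  CategoryTheory.Abelian.Pseudoelement.homToFun

open CategoryTheory.Abelian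

/-- The map induced on horizontal cokernels by a commutative square with
exact-ish rows is a monomorphism (the relevant part of the snake lemma). -/
lemma mono_cokernel_map {X₁ X₂ X₃ E₁ Y₁ E₃ F : A}
    {i : X₁ ⟶ X₂} {p : X₂ ⟶ X₃} {wip : i ≫ p = 0}
    (hse : (ShortComplex.mk i p wip).ShortExact)
    {a : X₁ ⟶ E₁} {cA : E₁ ⟶ Y₁} (hcAe : Epi cA) (wa : a ≫ cA = 0)
    {φ : X₂ ⟶ F} (hmφ : Mono φ) {ψ : E₁ ⟶ F} (hmψ : Mono ψ)
    {cc : X₃ ⟶ E₃} (hmcc : Mono cc) {θ : F ⟶ E₃}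
    (hiφ : i ≫ φ = a ≫ ψ) (hφθ : φ ≫ θ = p ≫ cc) (hψθ : ψ ≫ θ = 0)
    {abar : Y₁ ⟶ cokernel φ} (hab : cA ≫ abar = ψ ≫ cokernel.π φ) : Mono abar := by
  haveI := hmφ; haveI := hmψ; haveI := hmcc; haveI := hcAe
  apply Pseudoelement.mono_of_zero_of_map_zero
  intro y hy
  obtain ⟨ε, hε⟩ := Pseudoelement.pseudo_surjective_of_epi cA y
  have h1 : cokernel.π φ (ψ ε) = 0 := by
    have h2 : (cA ≫ abar) ε = 0 := by
      rw [Pseudoelement.comp_apply, hε, hy]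
    rwa [hab, Pseudoelement.comp_apply] at h2
  obtain ⟨b, hb⟩ := Pseudoelement.pseudo_exact_of_exact (ses_of_mono φ).exact (ψ ε) h1
  have hb' : φ b = ψ ε := hb
  have hccpb : cc (p b) = 0 := by
    have h3 : (φ ≫ θ) b = (ψ ≫ θ) ε := by
      rw [Pseudoelement.comp_apply, Pseudoelement.comp_apply, hb']
    rw [hφθ, hψθ, Pseudoelement.comp_apply] at h3
    exact h3.trans (Pseudoelement.zero_apply _ _)
  have hpb : p b = 0 :=
    Pseudoelement.zero_of_map_zero cc (Pseudoelement.pseudo_injective_of_mono cc) _ hccpb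
  obtain ⟨α, hα⟩ := Pseudoelement.pseudo_exact_of_exact hse.exact b hpb
  have hφb : ψ (a α) = ψ ε := by
    have h5 : (i ≫ φ) α = φ b := by rw [Pseudoelement.comp_apply, hα]
    rw [hiφ, Pseudoelement.comp_apply] at h5
    rw [h5, hb']
  have hε' : a α = ε := Pseudoelement.pseudo_injective_of_mono ψ hφb
  rw [← hε, ← hε', ← Pseudoelement.comp_apply, wa]
  exact Pseudoelement.zero_apply _ _

end PseudoMono

section Horseshoe

lemma injCor_horseshoe : ∀ (n : ℕ) {X₁ X₂ X₃ : A} (i : X₁ ⟶ X₂) (p : X₂ ⟶ X₃)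
    (w : i ≫ p = 0) (_ : (ShortComplex.mk i p w).ShortExact),
    InjCor X₁ n → InjCor X₃ n → InjCor X₂ n := by
  intro n
  induction n with
  | zero =>
    intro X₁ X₂ X₃ i p w hse h₁ h₃
    haveI : Mono i := hse.mono_f
    obtain ⟨r, hr⟩ := h₁.factors (𝟙 X₁) i
    have spl := ShortComplex.Splitting.ofExactOfRetraction _ hse.exact r hr hse.epi_g
    constructor
    intro S T h0 m hm
    obtain ⟨k₁, hk₁⟩ := h₁.factors (h0 ≫ spl.r) m
    obtain ⟨k₃, hk₃⟩ := h₃.factors (h0 ≫ p) m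
    refine ⟨k₁ ≫ i + k₃ ≫ spl.s, ?_⟩
    have heq : m ≫ (k₁ ≫ i + k₃ ≫ spl.s) = h0 ≫ (spl.r ≫ i + p ≫ spl.s) := by
      rw [Preadditive.comp_add, Preadditive.comp_add, ← Category.assoc, hk₁,
        ← Category.assoc, hk₃, Category.assoc, Category.assoc]
    rw [heq, spl.id, Category.comp_id]
  | succ m ih =>
    rintro X₁ X₂ X₃ i p w hse ⟨E₁, Y₁, a, cA, wa, hE₁, hseA, hY₁⟩
      ⟨E₃, Y₃, cc, pc, wc, hE₃, hseC, hY₃⟩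
    haveI : Mono i := hse.mono_f
    haveI hma : Mono a := hseA.mono_f
    haveI hmcc : Mono cc := hseC.mono_f
    haveI hpe : Epi p := hse.epi_g
    haveI hcAe : Epi cA := hseA.epi_g
    haveI hpce : Epi pc := hseC.epi_g
    obtain ⟨u, hu⟩ := hE₁.factors a i
    set φ : X₂ ⟶ E₁ ⊞ E₃ := biprod.lift u (p ≫ cc) with hφdef
    have hiφ : i ≫ φ = a ≫ biprod.inl := by
      apply biprod.hom_ext
      · rw [Category.assoc, Category.assoc, biprod.lift_fst, biprod.inl_fst,
          Category.comp_id, hu]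
      · rw [Category.assoc, Category.assoc, biprod.lift_snd, biprod.inl_snd, comp_zero,
          ← Category.assoc, w, zero_comp]
    have hmφ : Mono φ := by
      apply Preadditive.mono_of_cancel_zero
      intro T t ht
      have htu : t ≫ u = 0 := by
        have h6 := congrArg (· ≫ (biprod.fst : E₁ ⊞ E₃ ⟶ E₁)) ht
        simpa [hφdef, Category.assoc] using h6
      have htp : t ≫ p = 0 := by
        have h7 := congrArg (· ≫ (biprod.snd : E₁ ⊞ E₃ ⟶ E₃)) ht
        simp only [hφdef, Category.assoc, biprod.lift_snd, zero_comp] at h7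
        rw [← Category.assoc] at h7
        exact zero_of_comp_mono cc h7
      obtain ⟨t', ht'⟩ := KernelFork.IsLimit.lift' hse.fIsKernel t htp
      have ht'' : t' ≫ i = t := ht'
      have h8 : t' ≫ a = 0 := by
        rw [← hu, ← Category.assoc, ht'', htu]
      rw [← ht'', zero_of_comp_mono a h8, zero_comp]
    haveI := hmφ
    -- the map from Y₁ to the cokernel of φ
    have hainl : a ≫ biprod.inl ≫ cokernel.π φ = 0 := by
      rw [← Category.assoc, ← hiφ, Category.assoc, cokernel.condition, comp_zero]
    obtain ⟨abar, habar⟩ := CokernelCofork.IsColimit.desc' hseA.gIsCokernel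
      (biprod.inl ≫ cokernel.π φ) hainl
    have habar' : cA ≫ abar = biprod.inl ≫ cokernel.π φ := habar
    -- the map from the cokernel of φ to Y₃
    have hφsnd : φ ≫ (biprod.snd : E₁ ⊞ E₃ ⟶ E₃) ≫ pc = 0 := by
      rw [← Category.assoc, hφdef, biprod.lift_snd, Category.assoc, wc, comp_zero]
    set qbar : cokernel φ ⟶ Y₃ := cokernel.desc φ (biprod.snd ≫ pc) hφsnd with hqdef
    have hq : cokernel.π φ ≫ qbar = biprod.snd ≫ pc := cokernel.π_desc _ _ _
    have hwq : abar ≫ qbar = 0 := by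
      rw [← cancel_epi cA, ← Category.assoc, habar', Category.assoc, hq, comp_zero,
        ← Category.assoc, biprod.inl_snd, zero_comp]
    have hqe : Epi qbar := by
      have : Epi (cokernel.π φ ≫ qbar) := by
        rw [hq]; exact epi_comp _ _
      exact epi_of_epi (cokernel.π φ) qbar
    have hmabar : Mono abar := by
      refine mono_cokernel_map hse hcAe wa hmφ ?_ hmcc (θ := biprod.snd) hiφ ?_ ?_ habar'
      · infer_instance
      · rw [hφdef, biprod.lift_snd]
      · exact biprod.inl_snd
    -- qbar is a cokernel of abar
    have hcolim : IsColimit (CokernelCofork.ofπ qbar hwq) := by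
      refine CokernelCofork.IsColimit.ofπ' _ _ (fun {T} t ht => ?_)
      have hinlt : biprod.inl ≫ cokernel.π φ ≫ t = 0 := by
        rw [← Category.assoc, ← habar', Category.assoc, ht, comp_zero]
      have hccs : cc ≫ biprod.inr ≫ cokernel.π φ ≫ t = 0 := by
        have h0 : φ ≫ cokernel.π φ ≫ t = 0 := by
          rw [← Category.assoc, cokernel.condition, zero_comp]
        have hgen : ∀ {T' : A} (ρ : E₁ ⊞ E₃ ⟶ T'),
            φ ≫ ρ = u ≫ biprod.inl ≫ ρ + (p ≫ cc) ≫ biprod.inr ≫ ρ := by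
          intro T' ρ
          rw [hφdef, biprod.lift_eq, Preadditive.add_comp, Category.assoc, Category.assoc]
        have h1 : u ≫ biprod.inl ≫ cokernel.π φ ≫ t
            + (p ≫ cc) ≫ biprod.inr ≫ cokernel.π φ ≫ t = 0 := by
          rw [← hgen]; exact h0
        rw [hinlt, comp_zero, zero_add, Category.assoc] at h1
        exact (cancel_epi p).mp (h1.trans (comp_zero (f := p)).symm)
      obtain ⟨l, hl⟩ := CokernelCofork.IsColimit.desc' hseC.gIsCokernel
        (biprod.inr ≫ cokernel.π φ ≫ t) hccs
      have hl' : pc ≫ l = biprod.inr ≫ cokernel.π φ ≫ t := hl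
      refine ⟨l, ?_⟩
      rw [← cancel_epi (cokernel.π φ), ← Category.assoc, hq, Category.assoc, hl']
      have htot := congrArg (fun z : E₁ ⊞ E₃ ⟶ E₁ ⊞ E₃ => z ≫ cokernel.π φ ≫ t)
        (biprod.total (X := E₁) (Y := E₃))
      simp only [Preadditive.add_comp, Category.assoc, Category.id_comp] at htot
      rw [hinlt, comp_zero, zero_add] at htot
      exact htot
    have hseW : (ShortComplex.mk abar qbar hwq).ShortExact := by
      refine ShortComplex.ShortExact.mk' ?_ hmabar hqe
      exact ShortComplex.exact_of_g_is_cokernel _ hcolim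
    exact ⟨E₁ ⊞ E₃, cokernel φ, φ, cokernel.π φ, cokernel.condition φ,
      injective_biprod hE₁ hE₃, ses_of_mono φ, ih abar qbar hwq hseW hY₁ hY₃⟩

end Horseshoe

lemma injCor_of_ses (n : ℕ) {N B₀ X : A} (α : N ⟶ B₀) (β : B₀ ⟶ X) (w : α ≫ β = 0)
    (hse : (ShortComplex.mk α β w).ShortExact)
    (hN : InjCor N (n + 1)) (hB : InjCor B₀ n) : InjCor X n := by
  obtain ⟨E, N', a, cN, wa, hE, hseN, hN'⟩ := hN
  have hpo1 := pushout_ses_fst a α hseN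
  have hpo2 := pushout_ses_snd a α hse
  have hG := injCor_horseshoe n _ _ _ hpo1 hB hN'
  exact injCor_quot n _ _ _ hpo2 hE hG

lemma injCor_all (d : ℕ) (hgl : ∀ X : A, ProjDimLE X (d + 1))
    (hdom : ∀ P : A, Projective P → CoresProjInj P (d + 1)) :
    ∀ (n : ℕ) (X : A), ProjDimLE X n → InjCor X (d + 1)
  | 0, _, hX => injCor_of_projective d hgl hdom hX
  | n + 1, _, ⟨_, K, α, β, w, hP, hse, hK⟩ =>
      injCor_of_ses (d + 1) α β w hse
        (injCor_succ (d + 1) (injCor_all d hgl hdom n K hK))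
        (injCor_of_projective d hgl hdom hP)

lemma part1 (d : ℕ) (hgl : ∀ X : A, ProjDimLE X (d + 1))
    (hdom : ∀ P : A, Projective P → CoresProjInj P (d + 1)) :
    EnoughInjectives A := by
  constructor
  intro X
  obtain ⟨E, Y, ι, π, w, hE, hse, -⟩ := injCor_all d hgl hdom (d + 1) X (hgl X)
  exact ⟨⟨E, hE, ι, hse.mono_f⟩⟩

theorem statement10 (d : ℕ) (hd : 1 ≤ d) [EnoughProjectives A]
    (hgl : ∀ X : A, ProjDimLE X (d + 1))
    (hdom : ∀ P : A, Projective P → CoresProjInj P (d + 1)) :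
    EnoughInjectives A ∧ ∀ J : A, Injective J → ResProjInj J (d + 1) := by
  exact ⟨part1 d hgl hdom, part2 d hdom⟩

end AuslanderIyamaStmt10
end

section
/- Let Γ be a ring and I a Γ-module which is injective and such that there is an exact sequence of Γ-modules 0 → Γ → I₀ → I₁ with I₀, I₁ ∈ add I. Let Λ = End_Γ(I), so that for every Γ-module X the abelian group Hom_Γ(X, I) is a left Λ-module via post-composition. Then the contravariant functor Hom_Γ(−, I), from the category of finitely generated projective Γ-modules to the category of left Λ-modules, is fully faithful: for all finitely generated projective Γ-modules P and Q, the map Hom_Γ(P, Q) → Hom_Λ(Hom_Γ(Q, I), Hom_Γ(P, I)) sending f to precomposition with f is bijective. -/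
/-!
Statement 15: Let `Γ` be a ring, `I` an injective `Γ`-module with an exact sequence
`0 → Γ → I₀ → I₁` where `I₀, I₁ ∈ add I`, and `Λ = End_Γ(I)`. Then the contravariant
functor `Hom_Γ(-, I)` from finitely generated projective `Γ`-modules to left
`Λ`-modules is fully faithful: for all finitely generated projective `P`, `Q`, the map
`Hom_Γ(P, Q) → Hom_Λ(Hom_Γ(Q, I), Hom_Γ(P, I))`, `f ↦ (g ↦ g ∘ f)`, is bijective.
(A homomorphism of left `Λ`-modules `Hom_Γ(Q, I) → Hom_Γ(P, I)` is an additive map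
commuting with the `Λ`-action `λ • φ = λ ∘ φ`.)
-/

universe u

namespace AuslanderIyamaStmt15

open LinearMap

/-- `X` belongs to `add I`: `X` is a direct summand of a finite direct power of `I`. -/
def inAdd (Γ : Type u) [Ring Γ] (I : Type u) [AddCommGroup I] [Module Γ I]
    (X : Type u) [AddCommGroup X] [Module Γ X] : Prop :=
  ∃ (n : ℕ) (s : X →ₗ[Γ] (Fin n → I)) (r : (Fin n → I) →ₗ[Γ] X),
    r ∘ₗ s = LinearMap.id

/-- Generalized `add I`: direct summand of a power of `I` indexed by a (small) finite type. -/
def MyAdd (Γ : Type u) [Ring Γ] (I : Type u) [AddCommGroup I] [Module Γ I]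
    (X : Type u) [AddCommGroup X] [Module Γ X] : Prop :=
  ∃ (κ : Type) (_ : Fintype κ) (s : X →ₗ[Γ] (κ → I)) (r : (κ → I) →ₗ[Γ] X),
    r ∘ₗ s = LinearMap.id

section lemmas

variable {Γ : Type u} [Ring Γ] {I : Type u} [AddCommGroup I] [Module Γ I]

theorem MyAdd.of_inAdd {X : Type u} [AddCommGroup X] [Module Γ X]
    (h : inAdd Γ I X) : MyAdd Γ I X := by
  obtain ⟨n, s, r, hrs⟩ := h
  exact ⟨Fin n, inferInstance, s, r, hrs⟩

theorem MyAdd.self : MyAdd Γ I I := by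
  refine ⟨PUnit, inferInstance, LinearMap.pi (fun _ => LinearMap.id),
    LinearMap.proj PUnit.unit, ?_⟩
  ext x; simp

theorem MyAdd.pi {X : Type u} [AddCommGroup X] [Module Γ X]
    (μ : Type) [Fintype μ] (h : MyAdd Γ I X) : MyAdd Γ I (μ → X) := by
  obtain ⟨κ, _, s, r, hrs⟩ := h
  refine ⟨μ × κ, inferInstance,
    LinearMap.pi (fun jk => (LinearMap.proj jk.2) ∘ₗ s ∘ₗ (LinearMap.proj jk.1)),
    LinearMap.pi (fun i : μ => r ∘ₗ LinearMap.pi (fun j : κ => LinearMap.proj (i, j))), ?_⟩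
  refine LinearMap.ext fun x => funext fun i => ?_
  have h1 : (LinearMap.pi (fun j : κ => LinearMap.proj (i, j) : κ → ((μ × κ → I) →ₗ[Γ] I)))
      ((LinearMap.pi (fun jk : μ × κ => (LinearMap.proj jk.2) ∘ₗ s ∘ₗ (LinearMap.proj jk.1))) x)
      = s (x i) := funext fun j => rfl
  show ((LinearMap.pi fun i : μ => r ∘ₗ LinearMap.pi fun j : κ => LinearMap.proj (i, j))
      ((LinearMap.pi fun jk : μ × κ => (LinearMap.proj jk.2) ∘ₗ s ∘ₗ (LinearMap.proj jk.1)) x)) i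
      = (LinearMap.id : X →ₗ[Γ] X) (x i)
  rw [LinearMap.pi_apply, LinearMap.comp_apply, h1]
  exact LinearMap.congr_fun hrs (x i)

theorem MyAdd.prod {X Y : Type u} [AddCommGroup X] [Module Γ X]
    [AddCommGroup Y] [Module Γ Y]
    (hX : MyAdd Γ I X) (hY : MyAdd Γ I Y) : MyAdd Γ I (X × Y) := by
  obtain ⟨κ₁, _, s₁, r₁, hrs₁⟩ := hX
  obtain ⟨κ₂, _, s₂, r₂, hrs₂⟩ := hY
  refine ⟨κ₁ ⊕ κ₂, inferInstance,
    LinearMap.pi (fun j => Sum.elim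
      (fun a => (LinearMap.proj a) ∘ₗ s₁ ∘ₗ (LinearMap.fst Γ X Y))
      (fun b => (LinearMap.proj b) ∘ₗ s₂ ∘ₗ (LinearMap.snd Γ X Y)) j),
    (r₁ ∘ₗ LinearMap.pi (fun a : κ₁ => LinearMap.proj (Sum.inl a))).prod
    (r₂ ∘ₗ LinearMap.pi (fun b : κ₂ => LinearMap.proj (Sum.inr b))), ?_⟩
  refine LinearMap.ext fun p => ?_
  refine Prod.ext ?_ ?_
  · show r₁ (fun a : κ₁ => _) = p.1
    have h1 : (fun a : κ₁ =>
        (LinearMap.pi (fun j : κ₁ ⊕ κ₂ => Sum.elim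
          (fun a => (LinearMap.proj a) ∘ₗ s₁ ∘ₗ (LinearMap.fst Γ X Y))
          (fun b => (LinearMap.proj b) ∘ₗ s₂ ∘ₗ (LinearMap.snd Γ X Y)) j) p) (Sum.inl a))
        = s₁ p.1 := funext fun a => rfl
    exact LinearMap.congr_fun hrs₁ p.1
  · show r₂ (fun b : κ₂ => _) = p.2
    have h2 : (fun b : κ₂ =>
        (LinearMap.pi (fun j : κ₁ ⊕ κ₂ => Sum.elim
          (fun a => (LinearMap.proj a) ∘ₗ s₁ ∘ₗ (LinearMap.fst Γ X Y))
          (fun b => (LinearMap.proj b) ∘ₗ s₂ ∘ₗ (LinearMap.snd Γ X Y)) j) p) (Sum.inr b))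
        = s₂ p.2 := funext fun b => rfl
    exact LinearMap.congr_fun hrs₂ p.2

/-- separation: maps into `I` jointly detect elements of a module in `add I`. -/
theorem MyAdd.sep {Z : Type u} [AddCommGroup Z] [Module Γ Z]
    (hZ : MyAdd Γ I Z) (z : Z) (h : ∀ φ : Z →ₗ[Γ] I, φ z = 0) : z = 0 := by
  obtain ⟨κ, _, s, r, hrs⟩ := hZ
  have hsz : s z = 0 := funext fun j => by simpa using h ((LinearMap.proj j) ∘ₗ s)
  have h2 := LinearMap.congr_fun hrs z
  simp only [coe_comp, Function.comp_apply, id_coe, id_eq] at h2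
  rw [← h2, hsz, map_zero]

/-- modules in `add I` are injective. -/
theorem MyAdd.extension (hI : Module.Injective Γ I)
    {Z : Type u} [AddCommGroup Z] [Module Γ Z] (hZ : MyAdd Γ I Z)
    {X Y : Type u} [AddCommGroup X] [Module Γ X] [AddCommGroup Y] [Module Γ Y]
    (χ : X →ₗ[Γ] Y) (hχ : Function.Injective χ) (g : X →ₗ[Γ] Z) :
    ∃ h : Y →ₗ[Γ] Z, h ∘ₗ χ = g := by
  obtain ⟨κ, _, s, r, hrs⟩ := hZ
  choose e he using fun j : κ => hI.out χ hχ ((LinearMap.proj j) ∘ₗ s ∘ₗ g)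
  refine ⟨r ∘ₗ LinearMap.pi e, ?_⟩
  refine LinearMap.ext fun x => ?_
  have h1 : (LinearMap.pi e) (χ x) = s (g x) := funext fun j => by simpa using he j x
  show r ((LinearMap.pi e) (χ x)) = g x
  rw [h1]
  exact LinearMap.congr_fun hrs (g x)

end lemmas

set_option maxHeartbeats 2000000 in
theorem statement15 (Γ : Type u) [Ring Γ]
    (I : Type u) [AddCommGroup I] [Module Γ I] (hI : Module.Injective Γ I)
    (I₀ I₁ : Type u) [AddCommGroup I₀] [Module Γ I₀] [AddCommGroup I₁] [Module Γ I₁]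
    (hI₀ : inAdd Γ I I₀) (hI₁ : inAdd Γ I I₁)
    (α : Γ →ₗ[Γ] I₀) (β : I₀ →ₗ[Γ] I₁)
    (hα : Function.Injective α) (hαβ : Function.Exact α β)
    (P Q : Type u) [AddCommGroup P] [Module Γ P] [AddCommGroup Q] [Module Γ Q]
    [Module.Finite Γ P] [Module.Projective Γ P]
    [Module.Finite Γ Q] [Module.Projective Γ Q] :
    -- injectivity of `f ↦ (g ↦ g ∘ f)`
    (∀ f f' : P →ₗ[Γ] Q, (∀ g : Q →ₗ[Γ] I, g ∘ₗ f = g ∘ₗ f') → f = f') ∧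
    -- surjectivity onto the `Λ`-homomorphisms, where `Λ = End_Γ(I)` acts by
    -- post-composition
    ∀ θ : (Q →ₗ[Γ] I) →+ (P →ₗ[Γ] I),
      (∀ (lam : Module.End Γ I) (g : Q →ₗ[Γ] I), θ (lam ∘ₗ g) = lam ∘ₗ θ g) →
      ∃ f : P →ₗ[Γ] Q, ∀ g : Q →ₗ[Γ] I, θ g = g ∘ₗ f := by
  classical
  -- a split presentation of `Q` by a finite free module
  obtain ⟨m, π, hπ⟩ := Module.Finite.exists_fin' Γ Q
  obtain ⟨σ, hσ⟩ := Module.projective_lifting_property π LinearMap.id hπ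
  have hπσ : ∀ q, π (σ q) = q := fun q => LinearMap.congr_fun hσ q
  have hσinj : Function.Injective σ := fun a b hab => by
    have := congrArg π hab; rwa [hπσ, hπσ] at this
  -- the embedding `Q ↪ Q₀ := Fin m → I₀`
  set αm : (Fin m → Γ) →ₗ[Γ] (Fin m → I₀) := α.compLeft (Fin m) with hαmdef
  have hαminj : Function.Injective αm := fun x y hxy => funext fun i => hα (congrFun hxy i)
  have hιinj : Function.Injective (αm ∘ₗ σ) := fun a b hab => hσinj (hαminj hab)
  have hQ₀add : MyAdd Γ I (Fin m → I₀) := MyAdd.pi (Fin m) (MyAdd.of_inAdd hI₀)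
  set τ : (Fin m → Γ) →ₗ[Γ] (Fin m → Γ) := LinearMap.id - σ ∘ₗ π with hτdef
  -- extend `αm ∘ (1 - σπ)` along `αm` using injectivity of `Fin m → I₀`
  obtain ⟨E, hE⟩ :=
    MyAdd.extension hI hQ₀add αm hαminj (αm ∘ₗ τ)
  -- the copresentation map `δ : Q₀ → Q₁` whose kernel is the image of `Q`
  set δ : (Fin m → I₀) →ₗ[Γ] ((Fin m → I₁) × (Fin m → I₀)) :=
    (β.compLeft (Fin m)).prod E with hδdef
  have hδι : ∀ q : Q, δ (αm (σ q)) = 0 := by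
    intro q
    have h1 : β.compLeft (Fin m) (αm (σ q)) = 0 :=
      funext fun i => (hαβ (α (σ q i))).mpr ⟨σ q i, rfl⟩
    have h0 : τ (σ q) = 0 := by
      have : τ (σ q) = σ q - σ (π (σ q)) := rfl
      rw [this, hπσ, sub_self]
    have h2 : E (αm (σ q)) = 0 := by
      have h3 := LinearMap.congr_fun hE (σ q)
      have h4 : (αm ∘ₗ τ) (σ q) = 0 := by
        show αm (τ (σ q)) = 0
        rw [h0, map_zero]
      rw [← h4]; exact h3
    show (β.compLeft (Fin m) (αm (σ q)), E (αm (σ q))) = 0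
    rw [h1, h2]; rfl
  have hker : ∀ x : Fin m → I₀, δ x = 0 → ∃ q : Q, αm (σ q) = x := by
    intro x hx
    have hx1 : β.compLeft (Fin m) x = 0 := congrArg Prod.fst hx
    have hx2 : E x = 0 := congrArg Prod.snd hx
    choose y hy using fun i => (hαβ (x i)).mp (congrFun hx1 i)
    have hxy : αm y = x := funext hy
    have h2 : αm (τ y) = 0 := by
      rw [← LinearMap.comp_apply, ← hE, LinearMap.comp_apply, hxy, hx2]
    have h3 : τ y = 0 := hαminj (by rw [h2, map_zero])
    have h4 : y = σ (π y) := by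
      have h5 : y - σ (π y) = 0 := h3
      exact (sub_eq_zero.mp h5)
    exact ⟨π y, by rw [← h4, hxy]⟩
  have hQ₀add' := hQ₀add
  obtain ⟨κ, _, s, r, hrs⟩ := hQ₀add'
  have hrs' : ∀ z, r (s z) = z := fun z => LinearMap.congr_fun hrs z
  constructor
  · -- faithfulness
    intro f f' hff'
    refine LinearMap.ext fun p => ?_
    have hsep : s (αm (σ (f p))) = s (αm (σ (f' p))) := funext fun j => by
      have := LinearMap.congr_fun
        (hff' (((LinearMap.proj j : (κ → I) →ₗ[Γ] I) ∘ₗ s) ∘ₗ (αm ∘ₗ σ))) p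
      exact this
    have hsinj : Function.Injective s := fun a b hab => by
      have := congrArg r hab; rwa [hrs', hrs'] at this
    exact hσinj (hαminj (hsinj hsep))
  · -- fullness
    intro θ hθ
    set Ψ : ((Fin m → I₀) →ₗ[Γ] I) →+ (P →ₗ[Γ] I) :=
      AddMonoidHom.mk' (fun g₀ => θ (g₀ ∘ₗ (αm ∘ₗ σ)))
        (fun a b => by
          show θ ((a + b) ∘ₗ (αm ∘ₗ σ)) = θ (a ∘ₗ (αm ∘ₗ σ)) + θ (b ∘ₗ (αm ∘ₗ σ))
          rw [LinearMap.add_comp, map_add]) with hΨdef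
    have hΨlam : ∀ (lam : Module.End Γ I) (g₀ : (Fin m → I₀) →ₗ[Γ] I),
        Ψ (lam ∘ₗ g₀) = lam ∘ₗ Ψ g₀ := fun lam g₀ => by
      show θ ((lam ∘ₗ g₀) ∘ₗ (αm ∘ₗ σ)) = lam ∘ₗ θ (g₀ ∘ₗ (αm ∘ₗ σ))
      rw [LinearMap.comp_assoc]; exact hθ lam _
    set F : P →ₗ[Γ] (κ → I) :=
      LinearMap.pi (fun j : κ => Ψ ((LinearMap.proj j) ∘ₗ s)) with hFdef
    -- Claim A : `g₀ ∘ (r ∘ F) = Ψ g₀` for every `g₀ : Q₀ → I`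
    have claimA : ∀ g₀ : (Fin m → I₀) →ₗ[Γ] I, g₀ ∘ₗ (r ∘ₗ F) = Ψ g₀ := by
      intro g₀
      have key : (∑ j : κ, (g₀ ∘ₗ r ∘ₗ LinearMap.single Γ (fun _ : κ => I) j) ∘ₗ
          ((LinearMap.proj j) ∘ₗ s)) = g₀ := by
        refine LinearMap.ext fun z => ?_
        rw [LinearMap.sum_apply]
        have hterm : ∀ j : κ, ((g₀ ∘ₗ r ∘ₗ LinearMap.single Γ (fun _ : κ => I) j) ∘ₗ
            ((LinearMap.proj j) ∘ₗ s)) z = g₀ (r (Pi.single j (s z j))) := fun j => rfl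
        rw [Finset.sum_congr rfl (fun j _ => hterm j), ← map_sum, ← map_sum]
        have hsum : (∑ j : κ, Pi.single j (s z j)) = s z := funext fun i => by
          rw [Finset.sum_apply]; exact Fintype.sum_pi_single i (s z)
        rw [hsum, hrs']
      refine LinearMap.ext fun p => ?_
      have hFp : F p = ∑ j : κ, Pi.single j (Ψ ((LinearMap.proj j) ∘ₗ s) p) :=
        funext fun i => by
          rw [Finset.sum_apply]
          exact (Fintype.sum_pi_single i (fun j => Ψ ((LinearMap.proj j) ∘ₗ s) p)).symm
      have step : ∀ j : κ, g₀ (r (Pi.single j (Ψ ((LinearMap.proj j) ∘ₗ s) p))) =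
          Ψ ((g₀ ∘ₗ r ∘ₗ LinearMap.single Γ (fun _ : κ => I) j) ∘ₗ
            ((LinearMap.proj j) ∘ₗ s)) p := by
        intro j
        have h := LinearMap.congr_fun
          (hΨlam (g₀ ∘ₗ r ∘ₗ LinearMap.single Γ (fun _ : κ => I) j)
            ((LinearMap.proj j) ∘ₗ s)) p
        rw [LinearMap.comp_apply, LinearMap.comp_apply, LinearMap.comp_apply,
          LinearMap.single_apply] at h
        exact h.symm
      show g₀ (r (F p)) = Ψ g₀ p
      calc g₀ (r (F p))
          = ∑ j : κ, g₀ (r (Pi.single j (Ψ ((LinearMap.proj j) ∘ₗ s) p))) := by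
            rw [hFp, map_sum, map_sum]
        _ = ∑ j : κ, Ψ ((g₀ ∘ₗ r ∘ₗ LinearMap.single Γ (fun _ : κ => I) j) ∘ₗ
              ((LinearMap.proj j) ∘ₗ s)) p := Finset.sum_congr rfl fun j _ => step j
        _ = Ψ (∑ j : κ, (g₀ ∘ₗ r ∘ₗ LinearMap.single Γ (fun _ : κ => I) j) ∘ₗ
              ((LinearMap.proj j) ∘ₗ s)) p := by rw [map_sum, LinearMap.sum_apply]
        _ = Ψ g₀ p := by rw [key]
    -- Claim B : the image of `r ∘ F` lies in the kernel of `δ`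
    have hQ₁add : MyAdd Γ I ((Fin m → I₁) × (Fin m → I₀)) :=
      (MyAdd.pi (Fin m) (MyAdd.of_inAdd hI₁)).prod (MyAdd.pi (Fin m) (MyAdd.of_inAdd hI₀))
    have claimB : ∀ p : P, δ ((r ∘ₗ F) p) = 0 := by
      intro p
      refine hQ₁add.sep _ fun h => ?_
      have h2 : (h ∘ₗ δ) ∘ₗ (αm ∘ₗ σ) = 0 := LinearMap.ext fun q => by
        show h (δ (αm (σ q))) = 0
        rw [hδι q, map_zero]
      have h3 : Ψ (h ∘ₗ δ) = 0 := by
        show θ ((h ∘ₗ δ) ∘ₗ (αm ∘ₗ σ)) = 0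
        rw [h2, map_zero]
      calc h (δ ((r ∘ₗ F) p)) = ((h ∘ₗ δ) ∘ₗ (r ∘ₗ F)) p := rfl
        _ = Ψ (h ∘ₗ δ) p := LinearMap.congr_fun (claimA (h ∘ₗ δ)) p
        _ = 0 := by rw [h3]; rfl
    -- factor `r ∘ F` through `Q`
    have hmem : ∀ p : P, (r ∘ₗ F) p ∈ LinearMap.range (αm ∘ₗ σ) := fun p => by
      obtain ⟨q, hq⟩ := hker _ (claimB p)
      exact ⟨q, hq⟩
    set eQ := LinearEquiv.ofInjective (αm ∘ₗ σ) hιinj with heQdef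
    set f : P →ₗ[Γ] Q := eQ.symm.toLinearMap ∘ₗ
      LinearMap.codRestrict (LinearMap.range (αm ∘ₗ σ)) (r ∘ₗ F) hmem with hfdef
    have hf : ∀ p : P, (αm ∘ₗ σ) (f p) = (r ∘ₗ F) p := fun p => by
      have h1 : ((αm ∘ₗ σ) (f p) : Fin m → I₀) = (eQ (f p) : Fin m → I₀) :=
        (LinearEquiv.ofInjective_apply (αm ∘ₗ σ) (f p)).symm
      rw [h1, hfdef]
      show ((eQ (eQ.symm (⟨(r ∘ₗ F) p, hmem p⟩))) : Fin m → I₀) = (r ∘ₗ F) p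
      rw [eQ.apply_symm_apply]
    refine ⟨f, fun g => ?_⟩
    obtain ⟨g₀, hg₀⟩ := MyAdd.extension hI (MyAdd.self (Γ := Γ) (I := I)) (αm ∘ₗ σ) hιinj g
    calc θ g = θ (g₀ ∘ₗ (αm ∘ₗ σ)) := by rw [hg₀]
      _ = Ψ g₀ := rfl
      _ = g₀ ∘ₗ (r ∘ₗ F) := (claimA g₀).symm
      _ = g ∘ₗ f := LinearMap.ext fun p => by
          show g₀ ((r ∘ₗ F) p) = g (f p)
          rw [← hf p, ← hg₀]
          rfl


end AuslanderIyamaStmt15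
end
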